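/- arXiv:1007.1410 — 3 statements merged into one kernel-verified Lean document; each statement's English description precedes it below -/
import Mathlib

section
/- Let λ > 0, let t > 1 be real, and let K be a positive integer with K ≥ λ(1+t). Then Po(λ)([K,∞)) ≤ ((t+1)/t) · λ^K · e^{K−λ} / (√(2πK) · K^K). -/
open Real

/-- The upper tail `Po(λ)([K,∞)) = Σ_{j≥K} e^{−λ} λ^j / j!` of the Poisson
distribution with parameter `λ`. -/
noncomputable def poissonTail (lam : ℝ) (K : ℕ) : ℝ :=
  ∑' j : ℕ, Real.exp (-lam) * lam ^ (K + j) / (Nat.factorial (K + j))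

lemma aux_factorial_mul_pow_le (K j : ℕ) : K.factorial * K ^ j ≤ (K + j).factorial := by
  induction j with
  | zero => simp
  | succ j ih =>
    have : K + (j + 1) = (K + j) + 1 := by ring
    rw [this, Nat.factorial_succ, pow_succ]
    calc K.factorial * (K ^ j * K) = K * (K.factorial * K ^ j) := by ring
      _ ≤ (K + j + 1) * (K + j).factorial := by
          exact Nat.mul_le_mul (by omega) ih

lemma aux_stirling (K : ℕ) (hK : 0 < K) :
    Real.sqrt (2 * π * K) * (K : ℝ) ^ K ≤ K.factorial * Real.exp K := by
  have hs : Real.sqrt π ≤ Stirling.stirlingSeq K := by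
    obtain ⟨m, rfl⟩ := Nat.exists_eq_add_of_lt hK
    have ha : Antitone (Stirling.stirlingSeq ∘ Nat.succ) := Stirling.stirlingSeq'_antitone
    have ht : Filter.Tendsto (Stirling.stirlingSeq ∘ Nat.succ) Filter.atTop
        (nhds (Real.sqrt π)) :=
      Stirling.tendsto_stirlingSeq_sqrt_pi.comp (Filter.tendsto_add_atTop_nat 1)
    simpa [Nat.succ_eq_add_one, add_comm] using ha.le_of_tendsto ht m
  have hKpos : (0 : ℝ) < K := by exact_mod_cast hK
  have hdefs : Stirling.stirlingSeq K =
      K.factorial / (Real.sqrt (2 * K) * ((K : ℝ) / Real.exp 1) ^ K) := rfl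
  have hden : 0 < Real.sqrt (2 * K) * ((K : ℝ) / Real.exp 1) ^ K := by positivity
  have h1 : Real.sqrt π * (Real.sqrt (2 * K) * ((K : ℝ) / Real.exp 1) ^ K) ≤ K.factorial := by
    rw [hdefs] at hs
    calc Real.sqrt π * (Real.sqrt (2 * K) * ((K : ℝ) / Real.exp 1) ^ K)
        ≤ (K.factorial / (Real.sqrt (2 * K) * ((K : ℝ) / Real.exp 1) ^ K)) *
            (Real.sqrt (2 * K) * ((K : ℝ) / Real.exp 1) ^ K) := by
          apply mul_le_mul_of_nonneg_right hs hden.le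
      _ = K.factorial := by field_simp
  have hsqrt : Real.sqrt (2 * π * K) = Real.sqrt π * Real.sqrt (2 * K) := by
    rw [← Real.sqrt_mul (by positivity)]
    ring_nf
  have hexp : ((K : ℝ) / Real.exp 1) ^ K = (K : ℝ) ^ K / Real.exp K := by
    rw [div_pow, ← Real.exp_one_rpow (K : ℝ)]
    rw [← Real.rpow_natCast (Real.exp 1) K]
  have hexpK : (0 : ℝ) < Real.exp K := Real.exp_pos _
  rw [hexp] at h1
  have := mul_le_mul_of_nonneg_right h1 hexpK.le
  calc Real.sqrt (2 * π * K) * (K : ℝ) ^ K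
      = Real.sqrt π * (Real.sqrt (2 * K) * ((K : ℝ) ^ K / Real.exp K)) * Real.exp K := by
        rw [hsqrt]; field_simp
    _ ≤ K.factorial * Real.exp K := this

/-- for `λ > 0`, `t > 1` and a positive integer `K ≥ λ(1+t)`,
`Po(λ)([K,∞)) ≤ ((t+1)/t) · λ^K e^{K−λ} / (√(2πK) · K^K)`. -/
theorem poissonTail_le_stirling_bound
    (lam : ℝ) (hlam : 0 < lam) (t : ℝ) (ht : 1 < t)
    (K : ℕ) (hKpos : 0 < K) (hK : lam * (1 + t) ≤ (K : ℝ)) :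
    poissonTail lam K ≤
      (t + 1) / t * lam ^ K * Real.exp ((K : ℝ) - lam) /
        (Real.sqrt (2 * π * K) * (K : ℝ) ^ K) := by
  have hKR : (0 : ℝ) < K := by exact_mod_cast hKpos
  set r : ℝ := lam / K with hr
  have hr0 : 0 < r := by positivity
  have hlamK : lam * (1 + t) ≤ K := hK
  have hrle : r ≤ 1 / (1 + t) := by
    rw [hr, div_le_div_iff₀ hKR (by linarith)]
    linarith
  have hr1 : r < 1 := lt_of_le_of_lt hrle (by
    rw [div_lt_one (by linarith)]; linarith)
  set c : ℝ := Real.exp (-lam) * lam ^ K / K.factorial with hc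
  have hc0 : 0 < c := by positivity
  -- termwise bound
  have hterm : ∀ j : ℕ,
      Real.exp (-lam) * lam ^ (K + j) / (Nat.factorial (K + j)) ≤ c * r ^ j := by
    intro j
    have hfac : (K.factorial : ℝ) * (K : ℝ) ^ j ≤ ((K + j).factorial : ℝ) := by
      exact_mod_cast aux_factorial_mul_pow_le K j
    have hnum : (0 : ℝ) ≤ Real.exp (-lam) * lam ^ (K + j) := by positivity
    have hf1 : (0 : ℝ) < ((K + j).factorial : ℝ) := by positivity
    have hf2 : (0 : ℝ) < (K.factorial : ℝ) * (K : ℝ) ^ j := by positivity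
    calc Real.exp (-lam) * lam ^ (K + j) / (Nat.factorial (K + j))
        ≤ Real.exp (-lam) * lam ^ (K + j) / ((K.factorial : ℝ) * (K : ℝ) ^ j) := by
          apply div_le_div_of_nonneg_left hnum hf2 hfac
      _ = c * r ^ j := by
          rw [hc, hr, pow_add, div_pow]
          field_simp
  have hgeom : Summable (fun j : ℕ => c * r ^ j) :=
    (summable_geometric_of_lt_one hr0.le hr1).mul_left c
  have hsum : Summable (fun j : ℕ =>
      Real.exp (-lam) * lam ^ (K + j) / (Nat.factorial (K + j))) := by
    apply Summable.of_nonneg_of_le (fun j => by positivity) hterm hgeom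
  have h1 : poissonTail lam K ≤ c * (1 - r)⁻¹ := by
    rw [poissonTail]
    calc (∑' j : ℕ, Real.exp (-lam) * lam ^ (K + j) / (Nat.factorial (K + j)))
        ≤ ∑' j : ℕ, c * r ^ j := Summable.tsum_le_tsum hterm hsum hgeom
      _ = c * (1 - r)⁻¹ := by
          rw [tsum_mul_left, tsum_geometric_of_lt_one hr0.le hr1]
  have hinv : (1 - r)⁻¹ ≤ (t + 1) / t := by
    have h1r : (0 : ℝ) < t / (1 + t) := by positivity
    have : t / (1 + t) ≤ 1 - r := by
      have : 1 - 1 / (1 + t) = t / (1 + t) := by field_simp; ring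
      linarith [hrle, this]
    calc (1 - r)⁻¹ ≤ (t / (1 + t))⁻¹ := by
          apply inv_anti₀ h1r this
      _ = (t + 1) / t := by rw [inv_div]; ring_nf
  have h2 : poissonTail lam K ≤ c * ((t + 1) / t) :=
    h1.trans (mul_le_mul_of_nonneg_left hinv hc0.le)
  refine h2.trans ?_
  -- final Stirling step
  have hfact := aux_stirling K hKpos
  have hden : (0 : ℝ) < Real.sqrt (2 * π * K) * (K : ℝ) ^ K := by positivity
  have hfacpos : (0 : ℝ) < (K.factorial : ℝ) := by positivity
  have key : Real.exp (-lam) * lam ^ K / K.factorial ≤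
      lam ^ K * Real.exp ((K : ℝ) - lam) / (Real.sqrt (2 * π * K) * (K : ℝ) ^ K) := by
    rw [div_le_div_iff₀ hfacpos hden]
    have hexpsub : Real.exp ((K : ℝ) - lam) = Real.exp (K : ℝ) * Real.exp (-lam) := by
      rw [← Real.exp_add]; ring_nf
    calc Real.exp (-lam) * lam ^ K * (Real.sqrt (2 * π * K) * (K : ℝ) ^ K)
        ≤ Real.exp (-lam) * lam ^ K * ((K.factorial : ℝ) * Real.exp K) := by
          apply mul_le_mul_of_nonneg_left hfact (by positivity)
      _ = lam ^ K * Real.exp ((K : ℝ) - lam) * (K.factorial : ℝ) := by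
          rw [hexpsub]; ring
  calc c * ((t + 1) / t)
      = (t + 1) / t * (Real.exp (-lam) * lam ^ K / K.factorial) := by rw [hc]; ring
    _ ≤ (t + 1) / t * (lam ^ K * Real.exp ((K : ℝ) - lam) /
          (Real.sqrt (2 * π * K) * (K : ℝ) ^ K)) := by
        apply mul_le_mul_of_nonneg_left key (by positivity)
    _ = (t + 1) / t * lam ^ K * Real.exp ((K : ℝ) - lam) /
          (Real.sqrt (2 * π * K) * (K : ℝ) ^ K) := by ring
end

section
/- For every λ > 0, the function t ↦ g(λ,t) is continuous and strictly increasing on (0,∞), and maps the interval (0,∞) bijectively onto (0,∞). -/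
open Real

/-- `t_λ = 1 + (1 + √(1 + 16πλ))/(4πλ)`. -/
noncomputable def tcrit (lam : ℝ) : ℝ :=
  1 + (1 + Real.sqrt (1 + 16 * Real.pi * lam)) / (4 * Real.pi * lam)

/-- `h(λ,t)`: equal to `1` for `t ≤ t_λ` and to `√(t+1)/(√(2πλ)(t-1))` for `t > t_λ`. -/
noncomputable def hfun (lam t : ℝ) : ℝ :=
  if t ≤ tcrit lam then 1
  else Real.sqrt (t + 1) / (Real.sqrt (2 * Real.pi * lam) * (t - 1))

/-- `g(λ,t) = λ((1+t)log(1+t) − t) − log h(λ,t)`. -/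
noncomputable def gfun (lam t : ℝ) : ℝ :=
  lam * ((1 + t) * Real.log (1 + t) - t) - Real.log (hfun lam t)

open Set Filter Topology

noncomputable def phi (lam t : ℝ) : ℝ := lam * ((1 + t) * Real.log (1 + t) - t)

lemma tcrit_gt_one (lam : ℝ) (hlam : 0 < lam) : 1 < tcrit lam := by
  have hpi := Real.pi_pos
  have hs : 0 ≤ Real.sqrt (1 + 16 * Real.pi * lam) := Real.sqrt_nonneg _
  have : 0 < (1 + Real.sqrt (1 + 16 * Real.pi * lam)) / (4 * Real.pi * lam) := by
    positivity
  simp only [tcrit]; linarith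

lemma tcrit_key (lam : ℝ) (hlam : 0 < lam) :
    2 * Real.pi * lam * (tcrit lam - 1) ^ 2 = tcrit lam + 1 := by
  have hpi := Real.pi_pos
  have hD : (0:ℝ) ≤ 1 + 16 * Real.pi * lam := by positivity
  have hs2 : Real.sqrt (1 + 16 * Real.pi * lam) ^ 2 = 1 + 16 * Real.pi * lam :=
    Real.sq_sqrt hD
  have hne : (4 * Real.pi * lam) ≠ 0 := by positivity
  simp only [tcrit]
  field_simp
  have hs2' : Real.sqrt (1 + Real.pi * lam * 16) ^ 2 = 1 + Real.pi * lam * 16 := Real.sq_sqrt (by positivity)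
  nlinarith [hs2']

lemma phi_hasDerivAt (lam t : ℝ) (ht : -1 < t) :
    HasDerivAt (phi lam) (lam * Real.log (1 + t)) t := by
  have h1 : (0:ℝ) < 1 + t := by linarith
  have hlog : HasDerivAt (fun t : ℝ => Real.log (1 + t)) (1 / (1 + t)) t := by
    have := (Real.hasDerivAt_log (ne_of_gt h1)).comp t
      ((hasDerivAt_const t (1:ℝ)).add (hasDerivAt_id t))
    simpa [Function.comp_def] using this
  have hmul : HasDerivAt (fun t : ℝ => (1 + t) * Real.log (1 + t))
      (1 * Real.log (1 + t) + (1 + t) * (1 / (1 + t))) t := by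
    have := ((hasDerivAt_const t (1:ℝ)).add (hasDerivAt_id t)).mul hlog
    simpa [Pi.add_def, Pi.mul_def] using this
  have h2 : HasDerivAt (fun t : ℝ => (1 + t) * Real.log (1 + t) - t)
      (1 * Real.log (1 + t) + (1 + t) * (1 / (1 + t)) - 1) t :=
    hmul.sub (hasDerivAt_id t)
  have := h2.const_mul lam
  refine this.congr_deriv ?_
  rw [one_mul, mul_one_div_cancel h1.ne', add_sub_cancel_right]

lemma phi_strictMono (lam : ℝ) (hlam : 0 < lam) : StrictMonoOn (phi lam) (Ici 0) := by
  apply strictMonoOn_of_deriv_pos (convex_Ici 0)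
  · intro x hx
    exact ((phi_hasDerivAt lam x (by simp at hx; linarith)).continuousAt).continuousWithinAt
  · intro x hx
    rw [interior_Ici] at hx
    rw [(phi_hasDerivAt lam x (by simp at hx; linarith)).deriv]
    have : 0 < Real.log (1 + x) := Real.log_pos (by simp at hx; linarith)
    positivity

lemma phi_pos (lam : ℝ) (hlam : 0 < lam) {t : ℝ} (ht : 0 < t) : 0 < phi lam t := by
  have h1 : (0:ℝ) < 1 + t := by linarith
  have h2 : (1 + t)⁻¹ ≠ 1 := by
    intro h
    have : (1:ℝ) + t = 1 := by
      field_simp at h; linarith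
    linarith
  have := Real.log_lt_sub_one_of_pos (by positivity : (0:ℝ) < (1+t)⁻¹) h2
  rw [Real.log_inv] at this
  have key : t < (1 + t) * Real.log (1 + t) := by
    have h3 : (1+t)⁻¹ = 1/(1+t) := by ring
    rw [h3] at this
    have h4 : 0 < (1+t) := h1
    have h5 : (1+t) * (1/(1+t)) = 1 := by field_simp
    nlinarith [mul_lt_mul_of_pos_left this h4, h5]
  simp only [phi]
  nlinarith

noncomputable def psi (lam t : ℝ) : ℝ :=
  phi lam t + ((1/2) * Real.log (2 * Real.pi * lam) + Real.log (t - 1)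
    - (1/2) * Real.log (t + 1))

lemma gfun_eq_phi (lam : ℝ) {t : ℝ} (ht : t ≤ tcrit lam) : gfun lam t = phi lam t := by
  simp [gfun, hfun, phi, ht]

lemma gfun_eq_psi (lam : ℝ) (hlam : 0 < lam) {t : ℝ} (ht : tcrit lam ≤ t) :
    gfun lam t = psi lam t := by
  have hpi := Real.pi_pos
  have h1 : (1:ℝ) < t := lt_of_lt_of_le (tcrit_gt_one lam hlam) ht
  rcases le_or_gt t (tcrit lam) with h | h
  · have heq : t = tcrit lam := le_antisymm h ht
    rw [heq]
    have hkey := tcrit_key lam hlam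
    have ht1 : (0:ℝ) < tcrit lam - 1 := by linarith [tcrit_gt_one lam hlam]
    have h2pl : (0:ℝ) < 2 * Real.pi * lam := by positivity
    have hlog : Real.log (tcrit lam + 1)
        = Real.log (2 * Real.pi * lam) + 2 * Real.log (tcrit lam - 1) := by
      rw [← hkey, Real.log_mul (by positivity) (by positivity), Real.log_pow]
      push_cast; ring
    simp only [gfun, hfun, if_pos le_rfl, Real.log_one, sub_zero, psi, phi]
    rw [hlog]; ring
  · have ht1 : (0:ℝ) < t - 1 := by linarith
    have htp : (0:ℝ) < t + 1 := by linarith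
    have h2pl : (0:ℝ) < 2 * Real.pi * lam := by positivity
    have hs : (0:ℝ) < Real.sqrt (2 * Real.pi * lam) := Real.sqrt_pos.2 h2pl
    simp only [gfun, hfun, if_neg (not_le.2 h), psi, phi]
    rw [Real.log_div (by positivity) (by positivity),
      Real.log_mul (ne_of_gt hs) (ne_of_gt ht1),
      Real.log_sqrt (le_of_lt htp), Real.log_sqrt (le_of_lt h2pl)]
    ring

lemma quad_ge (lam : ℝ) (hlam : 0 < lam) {t : ℝ} (ht : tcrit lam ≤ t) :
    t + 1 ≤ 2 * Real.pi * lam * (t - 1) ^ 2 := by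
  have hpi := Real.pi_pos
  have hkey := tcrit_key lam hlam
  have h1 := tcrit_gt_one lam hlam
  nlinarith [mul_pos hpi hlam, sq_nonneg (t - tcrit lam), mul_nonneg (mul_nonneg (le_of_lt hpi) (le_of_lt hlam)) (mul_nonneg (sub_nonneg.2 ht) (sub_nonneg.2 ht))]

lemma hfun_pos (lam : ℝ) (hlam : 0 < lam) {t : ℝ} (ht : 0 < t) : 0 < hfun lam t := by
  have hpi := Real.pi_pos
  simp only [hfun]
  split_ifs with h
  · norm_num
  · push_neg at h
    have h1 : (1:ℝ) < t := lt_trans (tcrit_gt_one lam hlam) h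
    have : (0:ℝ) < Real.sqrt (t + 1) := Real.sqrt_pos.2 (by linarith)
    have hs : (0:ℝ) < Real.sqrt (2 * Real.pi * lam) := Real.sqrt_pos.2 (by positivity)
    exact div_pos this (mul_pos hs (by linarith))

lemma hfun_le_one (lam : ℝ) (hlam : 0 < lam) {t : ℝ} (ht : 0 < t) : hfun lam t ≤ 1 := by
  have hpi := Real.pi_pos
  simp only [hfun]
  split_ifs with h
  · exact le_refl 1
  · push_neg at h
    have h1 : (1:ℝ) < t := lt_trans (tcrit_gt_one lam hlam) h
    have hq := quad_ge lam hlam (le_of_lt h)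
    have hs : (0:ℝ) < Real.sqrt (2 * Real.pi * lam) := Real.sqrt_pos.2 (by positivity)
    have hd : (0:ℝ) < Real.sqrt (2 * Real.pi * lam) * (t - 1) := by
      apply mul_pos hs; linarith
    rw [div_le_one hd]
    calc Real.sqrt (t + 1) ≤ Real.sqrt (2 * Real.pi * lam * (t - 1)^2) :=
          Real.sqrt_le_sqrt hq
      _ = Real.sqrt (2 * Real.pi * lam) * (t - 1) := by
          rw [Real.sqrt_mul (by positivity), Real.sqrt_sq (by linarith : (0:ℝ) ≤ t - 1)]

lemma gfun_ge_phi (lam : ℝ) (hlam : 0 < lam) {t : ℝ} (ht : 0 < t) :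
    phi lam t ≤ gfun lam t := by
  have : Real.log (hfun lam t) ≤ 0 :=
    Real.log_nonpos (le_of_lt (hfun_pos lam hlam ht)) (hfun_le_one lam hlam ht)
  simp only [gfun, phi]; linarith

lemma psi_hasDerivAt (lam t : ℝ) (ht : 1 < t) :
    HasDerivAt (psi lam)
      (lam * Real.log (1 + t) + (1 / (t - 1) - 1/2 * (1 / (t + 1)))) t := by
  have h1 : t - 1 ≠ 0 := by intro h; nlinarith
  have h2 : t + 1 ≠ 0 := by intro h; nlinarith
  have hl1 : HasDerivAt (fun t : ℝ => Real.log (t - 1)) (1 / (t - 1)) t := by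
    have := (Real.hasDerivAt_log h1).comp t ((hasDerivAt_id t).sub_const 1)
    simpa [Function.comp_def] using this
  have hl2 : HasDerivAt (fun t : ℝ => Real.log (t + 1)) (1 / (t + 1)) t := by
    have := (Real.hasDerivAt_log h2).comp t ((hasDerivAt_id t).add_const 1)
    simpa [Function.comp_def] using this
  have hphi := phi_hasDerivAt lam t (by linarith)
  have := hphi.add (((hasDerivAt_const t ((1:ℝ)/2 * Real.log (2*Real.pi*lam))).add hl1).sub
    (hl2.const_mul (1/2 : ℝ)))
  refine this.congr_deriv ?_
  ring

lemma psi_strictMono (lam : ℝ) (hlam : 0 < lam) :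
    StrictMonoOn (psi lam) (Ici (tcrit lam)) := by
  have htc := tcrit_gt_one lam hlam
  apply strictMonoOn_of_deriv_pos (convex_Ici _)
  · intro x hx
    simp only [mem_Ici] at hx
    exact ((psi_hasDerivAt lam x (by linarith)).continuousAt).continuousWithinAt
  · intro x hx
    rw [interior_Ici] at hx
    simp only [mem_Ioi] at hx
    have hx1 : 1 < x := by linarith
    rw [(psi_hasDerivAt lam x hx1).deriv]
    have hlog : 0 < Real.log (1 + x) := Real.log_pos (by linarith)
    have ha : (0:ℝ) < x - 1 := by linarith
    have hb : (0:ℝ) < x + 1 := by linarith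
    have : 1/2 * (1 / (x + 1)) < 1 / (x - 1) := by
      have h := one_div_lt_one_div_of_lt ha (show x - 1 < x + 1 by linarith)
      have hpos : 0 < 1/(x+1) := one_div_pos.2 hb
      linarith
    nlinarith [mul_pos hlam hlog]

lemma gfun_continuousOn (lam : ℝ) (hlam : 0 < lam) :
    ContinuousOn (gfun lam) (Ioi 0) := by
  have htc := tcrit_gt_one lam hlam
  intro x hx
  simp only [mem_Ioi] at hx
  rcases lt_trichotomy x (tcrit lam) with h | h | h
  · have hphi : ContinuousAt (phi lam) x :=
      (phi_hasDerivAt lam x (by linarith)).continuousAt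
    have hev : (fun t => gfun lam t) =ᶠ[𝓝 x] fun t => phi lam t := by
      filter_upwards [Iio_mem_nhds h] with t ht
      exact gfun_eq_phi lam (le_of_lt ht)
    exact (hphi.congr hev.symm).continuousWithinAt
  · have h1 : ContinuousWithinAt (gfun lam) (Iic x) x := by
      have hphi : ContinuousAt (phi lam) x :=
        (phi_hasDerivAt lam x (by linarith)).continuousAt
      apply hphi.continuousWithinAt.congr
      · intro t ht
        exact gfun_eq_phi lam (by rw [← h] at *; exact ht)
      · exact gfun_eq_phi lam (le_of_eq h)
    have h2 : ContinuousWithinAt (gfun lam) (Ici x) x := by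
      have hpsi : ContinuousAt (psi lam) x :=
        (psi_hasDerivAt lam x (by linarith)).continuousAt
      apply hpsi.continuousWithinAt.congr
      · intro t ht
        exact gfun_eq_psi lam hlam (by rw [h] at ht; exact ht)
      · exact gfun_eq_psi lam hlam (le_of_eq h.symm)
    have := h1.union h2
    rw [Iic_union_Ici] at this
    exact this.mono (subset_univ _)
  · have hpsi : ContinuousAt (psi lam) x :=
      (psi_hasDerivAt lam x (by linarith)).continuousAt
    have hev : (fun t => gfun lam t) =ᶠ[𝓝 x] fun t => psi lam t := by
      filter_upwards [Ioi_mem_nhds h] with t ht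
      exact gfun_eq_psi lam hlam (le_of_lt ht)
    exact (hpsi.congr hev.symm).continuousWithinAt

lemma gfun_strictMonoOn (lam : ℝ) (hlam : 0 < lam) :
    StrictMonoOn (gfun lam) (Ioi 0) := by
  have htc := tcrit_gt_one lam hlam
  intro x hx y hy hxy
  simp only [mem_Ioi] at hx hy
  rcases le_or_gt y (tcrit lam) with h | h
  · rw [gfun_eq_phi lam (hxy.le.trans h), gfun_eq_phi lam h]
    exact phi_strictMono lam hlam (mem_Ici.2 hx.le) (mem_Ici.2 hy.le) hxy
  · rcases le_or_gt (tcrit lam) x with h2 | h2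
    · rw [gfun_eq_psi lam hlam h2, gfun_eq_psi lam hlam h.le]
      exact psi_strictMono lam hlam (mem_Ici.2 h2) (mem_Ici.2 h.le) hxy
    · rw [gfun_eq_phi lam h2.le, gfun_eq_psi lam hlam h.le]
      have a1 : phi lam x < phi lam (tcrit lam) :=
        phi_strictMono lam hlam (mem_Ici.2 hx.le) (mem_Ici.2 (by linarith)) h2
      have a2 : phi lam (tcrit lam) = psi lam (tcrit lam) := by
        rw [← gfun_eq_phi lam le_rfl, gfun_eq_psi lam hlam le_rfl]
      have a3 : psi lam (tcrit lam) < psi lam y :=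
        psi_strictMono lam hlam (mem_Ici.2 le_rfl) (mem_Ici.2 h.le) h
      linarith

/-- for every `λ > 0`, `t ↦ g(λ,t)` is continuous and strictly
increasing on `(0,∞)`, and maps `(0,∞)` bijectively onto `(0,∞)`. -/
theorem gfun_continuous_strictMono_bijOn (lam : ℝ) (hlam : 0 < lam) :
    ContinuousOn (gfun lam) (Set.Ioi (0 : ℝ)) ∧
    StrictMonoOn (gfun lam) (Set.Ioi (0 : ℝ)) ∧
    Set.BijOn (gfun lam) (Set.Ioi (0 : ℝ)) (Set.Ioi (0 : ℝ)) := by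
  have htc := tcrit_gt_one lam hlam
  refine ⟨gfun_continuousOn lam hlam, gfun_strictMonoOn lam hlam, ?_, ?_, ?_⟩
  · intro t ht
    simp only [mem_Ioi] at ht ⊢
    exact lt_of_lt_of_le (phi_pos lam hlam ht) (gfun_ge_phi lam hlam ht)
  · exact (gfun_strictMonoOn lam hlam).injOn
  · intro y hy
    simp only [mem_Ioi] at hy
    -- small point a
    have hca : ContinuousAt (phi lam) 0 := (phi_hasDerivAt lam 0 (by norm_num)).continuousAt
    have hphi0 : phi lam 0 = 0 := by simp [phi]
    have htend : Tendsto (phi lam) (𝓝[>] (0:ℝ)) (𝓝 0) := by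
      have := hca.continuousWithinAt (s := Ioi (0:ℝ))
      rw [ContinuousWithinAt, hphi0] at this
      exact this
    have hev1 : ∀ᶠ a in 𝓝[>] (0:ℝ), phi lam a < y := htend.eventually_lt_const hy
    have hev2 : ∀ᶠ a in 𝓝[>] (0:ℝ), a < tcrit lam := by
      have : Iio (tcrit lam) ∈ 𝓝[>] (0:ℝ) :=
        nhdsWithin_le_nhds (Iio_mem_nhds (by linarith))
      exact eventually_of_mem this (fun _ h => h)
    have hev3 : ∀ᶠ a in 𝓝[>] (0:ℝ), 0 < a :=
      eventually_of_mem self_mem_nhdsWithin (fun _ h => h)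
    obtain ⟨a, ha1, ha2, ha3⟩ := (hev1.and (hev2.and hev3)).exists
    -- large point b
    set b := max (Real.exp 2) (max (y / lam + 1) (tcrit lam)) with hbdef
    have hbtc : tcrit lam ≤ b := le_trans (le_max_right _ _) (le_max_right _ _)
    have hbe : Real.exp 2 ≤ b := le_max_left _ _
    have hby : y / lam + 1 ≤ b := le_trans (le_max_left _ _) (le_max_right _ _)
    have hb1 : (1:ℝ) < b := lt_of_lt_of_le htc hbtc
    have hlog2 : (2:ℝ) ≤ Real.log (1 + b) := by
      rw [← Real.log_exp 2]
      apply Real.log_le_log (Real.exp_pos 2)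
      linarith
    have hphib : y < phi lam b := by
      have hstep : lam * (b + 2) ≤ phi lam b := by
        simp only [phi]
        have hbpos : (0:ℝ) < 1 + b := by linarith
        nlinarith [mul_le_mul_of_nonneg_left hlog2 (le_of_lt hbpos)]
      have hstep2 : y < lam * (b + 2) := by
        have h5 : y / lam < b := by linarith
        have h6 : y = lam * (y / lam) := by field_simp
        rw [h6]
        apply mul_lt_mul_of_pos_left (by linarith) hlam
      linarith
    have hgb : y < gfun lam b :=
      lt_of_lt_of_le hphib (gfun_ge_phi lam hlam (by linarith : (0:ℝ) < b))
    have hga : gfun lam a < y := by rw [gfun_eq_phi lam ha2.le]; exact ha1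
    have hab : a ≤ b := by linarith
    have hIcc : Icc a b ⊆ Ioi 0 := fun t ht => lt_of_lt_of_le ha3 ht.1
    have hiv := intermediate_value_Icc hab ((gfun_continuousOn lam hlam).mono hIcc)
    obtain ⟨x, hxmem, hgx⟩ := hiv ⟨le_of_lt hga, le_of_lt hgb⟩
    exact ⟨x, hIcc hxmem, hgx⟩
end

section
/- Let W be a sum of finitely many mutually independent Bernoulli random variables with parameters p_v, λ = Σ_v p_v > 0 and λ₂ = Σ_v p_v². Then the total variation distance between the law of W and the Poisson distribution with parameter λ satisfies d_TV(L(W), Po(λ)) ≤ min(1, 1/λ) · λ₂, where d_TV(μ,ν) = sup_{A⊆ℕ} |μ(A) − ν(A)|. -/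
open MeasureTheory ProbabilityTheory Real

/-- The probability assigned to a set `A ⊆ ℕ` by the Poisson distribution
with parameter `λ`: `Po(λ)(A) = Σ_{n∈A} e^{−λ} λ^n / n!`. -/
noncomputable def poissonProb (lam : ℝ) (A : Set ℕ) : ℝ :=
  ∑' n : ℕ, A.indicator (fun n => Real.exp (-lam) * lam ^ n / (Nat.factorial n)) n

namespace SteinChen

variable (lam : ℝ)

noncomputable def u (i : ℕ) : ℝ := lam ^ i / i.factorial
noncomputable def S (k : ℕ) : ℝ := ∑ i ∈ Finset.range k, u lam i
noncomputable def T (k : ℕ) : ℝ := ∑' i : ℕ, u lam (i + k)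
noncomputable def aa (k : ℕ) : ℝ := (k-1).factorial / lam ^ k * S lam k
noncomputable def bb (k : ℕ) : ℝ := (k-1).factorial / lam ^ k * T lam k
noncomputable def c (j : ℕ) : ℝ := Real.exp (-lam) * u lam j
noncomputable def gg (j k : ℕ) : ℝ :=
  if k = 0 then 0 else if k ≤ j then -(c lam j * aa lam k) else c lam j * bb lam k

lemma summable_u : Summable (u lam) := Real.summable_pow_div_factorial lam

lemma summable_u_add (k : ℕ) : Summable (fun i => u lam (i + k)) :=
  (summable_nat_add_iff k).2 (summable_u lam)

lemma tsum_u : ∑' i, u lam i = Real.exp lam := by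
  rw [Real.exp_eq_exp_ℝ, NormedSpace.exp_eq_tsum_div]; rfl

lemma S_add_T (k : ℕ) : S lam k + T lam k = Real.exp lam := by
  rw [← tsum_u lam, S, T]; exact Summable.sum_add_tsum_nat_add k (summable_u lam)

lemma T_eq (k : ℕ) : T lam k = u lam k + T lam (k+1) := by
  rw [T, Summable.tsum_eq_zero_add (summable_u_add lam k)]
  simp only [zero_add, T]
  congr 1
  · exact tsum_congr fun i => by ring_nf

variable {lam} (hl : 0 < lam)
include hl

lemma u_pos (i : ℕ) : 0 < u lam i := div_pos (pow_pos hl i) (by positivity)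

lemma S_nonneg (k : ℕ) : 0 ≤ S lam k :=
  Finset.sum_nonneg fun i _ => (u_pos hl i).le

lemma T_nonneg (k : ℕ) : 0 ≤ T lam k := tsum_nonneg fun i => (u_pos hl _).le

lemma aa_nonneg (k : ℕ) : 0 ≤ aa lam k := by
  apply mul_nonneg (div_nonneg (by positivity) (by positivity)) (S_nonneg hl k)

lemma bb_nonneg (k : ℕ) : 0 ≤ bb lam k := by
  apply mul_nonneg (div_nonneg (by positivity) (by positivity)) (T_nonneg hl k)

lemma c_nonneg (j : ℕ) : 0 ≤ c lam j := mul_nonneg (Real.exp_nonneg _) (u_pos hl j).le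

omit hl in
lemma summable_c : Summable (c lam) := (summable_u lam).mul_left _

omit hl in
lemma tsum_c : ∑' j, c lam j = 1 := by
  simp only [c]
  rw [tsum_mul_left, tsum_u, ← Real.exp_add]
  simp

/-- a is monotone -/
lemma aa_mono (k : ℕ) (hk : 1 ≤ k) : aa lam k ≤ aa lam (k+1) := by
  -- aa k = ∑ i in range k, (k-1)! * lam^i / (i! * lam^k)
  have hrep : ∀ m : ℕ, aa lam m = ∑ i ∈ Finset.range m,
      (m-1).factorial * lam ^ i / (i.factorial * lam ^ m) := by
    intro m
    rw [aa, S, Finset.mul_sum]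
    exact Finset.sum_congr rfl fun i _ => by rw [u]; field_simp
  obtain ⟨n, rfl⟩ : ∃ n, k = n + 1 := ⟨k-1, (Nat.succ_pred_eq_of_pos hk).symm⟩
  rw [hrep (n+1), hrep (n+1+1),
    Finset.sum_range_succ' (fun i => ((n+1+1-1).factorial : ℝ) * lam ^ i /
      (i.factorial * lam ^ (n+1+1))) (n+1)]
  have h1 : 0 ≤ ((n+1+1-1).factorial : ℝ) * lam ^ 0 / (Nat.factorial 0 * lam ^ (n+1+1)) := by positivity
  refine le_trans (Finset.sum_le_sum fun i hi => ?_) (le_add_of_nonneg_right h1)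
  have hik : i + 1 ≤ n + 1 := Finset.mem_range.1 hi
  rw [div_le_div_iff₀ (by positivity) (by positivity)]
  have e1 : ((n+1+1-1).factorial : ℝ) = (n+1) * (n+1-1).factorial := by
    norm_num [Nat.factorial_succ]
  have h2 : ((i+1).factorial : ℝ) = (i+1) * i.factorial := by push_cast [Nat.factorial_succ]; ring
  have h3 : lam ^ (i+1) = lam * lam ^ i := by ring
  have h4 : lam ^ (n+1+1) = lam * lam ^ (n+1) := by ring
  rw [e1, h2, h3, h4]
  have key : ((i:ℝ)+1) ≤ (n:ℝ)+1 := by exact_mod_cast hik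
  have hC : (0:ℝ) ≤ ((n+1-1).factorial : ℝ) * i.factorial * (lam * lam ^ i * lam ^ (n+1)) := by
    positivity
  calc ((n+1-1).factorial : ℝ) * lam ^ i * (((i:ℝ)+1) * i.factorial * (lam * lam ^ (n+1)))
      = ((i:ℝ)+1) * (((n+1-1).factorial : ℝ) * i.factorial * (lam * lam ^ i * lam ^ (n+1))) := by
        ring
    _ ≤ ((n:ℝ)+1) * (((n+1-1).factorial : ℝ) * i.factorial * (lam * lam ^ i * lam ^ (n+1))) :=
        mul_le_mul_of_nonneg_right key hC
    _ = ((n:ℝ)+1) * ((n+1-1).factorial : ℝ) * (lam * lam ^ i) * (i.factorial * lam ^ (n+1)) := by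
        ring

noncomputable def vv (k m : ℕ) : ℝ := (k-1).factorial * lam ^ m / (k + m).factorial

lemma vv_le_u (k m : ℕ) : vv (lam := lam) k m ≤ u lam m := by
  rw [vv, u, div_le_div_iff₀ (by positivity) (by positivity)]
  have hnat : (k-1).factorial * m.factorial ≤ (k + m).factorial := by
    calc (k-1).factorial * m.factorial ≤ k.factorial * m.factorial := by
          exact Nat.mul_le_mul_right _ (Nat.factorial_le (Nat.sub_le k 1))
      _ ≤ (k + m).factorial := Nat.le_of_dvd (Nat.factorial_pos _)
          (Nat.factorial_mul_factorial_dvd_factorial_add k m)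
  calc ((k-1).factorial : ℝ) * lam ^ m * m.factorial
      = ((k-1).factorial * m.factorial : ℕ) * lam ^ m := by push_cast; ring
    _ ≤ ((k + m).factorial : ℕ) * lam ^ m := by
        apply mul_le_mul_of_nonneg_right _ (by positivity)
        exact_mod_cast hnat
    _ = lam ^ m * (k + m).factorial := by ring


lemma summable_vv (k : ℕ) : Summable (vv (lam := lam) k) :=
  Summable.of_nonneg_of_le (fun m => by rw [vv]; positivity)
    (fun m => vv_le_u hl k m) (summable_u lam)

lemma bb_eq_tsum_vv (k : ℕ) : bb lam k = ∑' m, vv (lam := lam) k m := by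
  rw [bb, T, ← tsum_mul_left]
  apply tsum_congr
  intro m
  rw [u, vv]
  rw [pow_add]
  field_simp
  ring

lemma bb_mono (k : ℕ) (hk : 1 ≤ k) : bb lam (k+1) ≤ bb lam k := by
  rw [bb_eq_tsum_vv hl, bb_eq_tsum_vv hl]
  apply Summable.tsum_le_tsum _ (summable_vv hl (k+1)) (summable_vv hl k)
  intro m
  rw [vv, vv]
  obtain ⟨n, rfl⟩ : ∃ n, k = n + 1 := ⟨k-1, (Nat.succ_pred_eq_of_pos hk).symm⟩
  rw [div_le_div_iff₀ (by positivity) (by positivity)]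
  have e1 : ((n+1+1-1).factorial:ℝ) = (n+1) * (n+1-1).factorial := by
    norm_num [Nat.factorial_succ]
  have e2 : ((n+1+m+1).factorial:ℝ) = (n+1+m+1) * (n+1+m).factorial := by
    push_cast [Nat.factorial_succ]; ring
  have e3 : ((n+1+1+m).factorial:ℝ) = ((n+1+m+1).factorial:ℝ) := by
    norm_num; ring_nf
  rw [e1, e3, e2]
  have hfac : (0:ℝ) < ((n+1-1).factorial:ℝ) * lam ^ m * ((n+1+m).factorial:ℝ) := by
    positivity
  have key : ((n:ℝ)+1) ≤ ((n:ℝ)+1+m+1) := by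
    have : (0:ℝ) ≤ (m:ℝ) := Nat.cast_nonneg m
    linarith
  have := mul_le_mul_of_nonneg_right key hfac.le
  push_cast
  simp only [Nat.add_sub_cancel] at this ⊢
  nlinarith [this]

lemma lam_mul_aa_succ (k : ℕ) (hk : 1 ≤ k) : lam * aa lam (k+1) = k * aa lam k + 1 := by
  obtain ⟨n, rfl⟩ : ∃ n, k = n + 1 := ⟨k-1, (Nat.succ_pred_eq_of_pos hk).symm⟩
  rw [aa, aa, S, Finset.sum_range_succ, ← S]
  simp only [Nat.add_sub_cancel]
  rw [u]
  have h1 : lam ^ (n+1) ≠ 0 := by positivity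
  have h2 : lam ≠ 0 := hl.ne'
  have h3 : ((n+1).factorial:ℝ) ≠ 0 := by positivity
  have e4 : ((n+1).factorial : ℝ) = (n+1) * n.factorial := by
    push_cast [Nat.factorial_succ]; ring
  field_simp
  rw [e4]
  push_cast
  ring

lemma lam_mul_bb_succ (k : ℕ) (hk : 1 ≤ k) : lam * bb lam (k+1) = k * bb lam k - 1 := by
  obtain ⟨n, rfl⟩ : ∃ n, k = n + 1 := ⟨k-1, (Nat.succ_pred_eq_of_pos hk).symm⟩
  rw [bb, bb, T_eq lam (n+1)]
  simp only [Nat.add_sub_cancel]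
  rw [u]
  have h1 : lam ^ (n+1) ≠ 0 := by positivity
  have h2 : lam ≠ 0 := hl.ne'
  have h3 : ((n+1).factorial:ℝ) ≠ 0 := by positivity
  have e4 : ((n+1).factorial : ℝ) = (n+1) * n.factorial := by
    push_cast [Nat.factorial_succ]; ring
  field_simp
  rw [e4]
  push_cast
  ring

lemma aa_one : aa lam 1 = 1 / lam := by
  rw [aa, S]
  simp [u]

omit hl in
lemma gg_a (j k : ℕ) (h1 : k ≠ 0) (h2 : k ≤ j) : gg lam j k = -(c lam j * aa lam k) := by
  rw [gg, if_neg h1, if_pos h2]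

omit hl in
lemma gg_b (j k : ℕ) (h1 : k ≠ 0) (h2 : j < k) : gg lam j k = c lam j * bb lam k := by
  rw [gg, if_neg h1, if_neg (by omega)]

lemma diag_identity (k : ℕ) (hk : 1 ≤ k) :
    lam * bb lam (k+1) + k * aa lam k
      = Real.exp lam * k.factorial / lam ^ k - 1 := by
  obtain ⟨n, rfl⟩ : ∃ n, k = n + 1 := ⟨k-1, (Nat.succ_pred_eq_of_pos hk).symm⟩
  have hT : T lam (n+1+1) = Real.exp lam - S lam (n+1) - u lam (n+1) := by
    have h1 := T_eq lam (n+1)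
    have h2 := S_add_T lam (n+1)
    linarith
  rw [bb, aa, hT]
  simp only [Nat.add_sub_cancel]
  rw [u]
  have h1 : lam ^ (n+1) ≠ 0 := by positivity
  have h2 : lam ≠ 0 := hl.ne'
  have h3 : ((n+1).factorial:ℝ) ≠ 0 := by positivity
  have e4 : ((n+1).factorial : ℝ) = (n+1) * n.factorial := by
    push_cast [Nat.factorial_succ]; ring
  field_simp
  rw [e4]
  push_cast
  ring

lemma c_mul_exp (k : ℕ) : c lam k * (Real.exp lam * k.factorial / lam ^ k) = 1 := by
  rw [c, u]
  have h2 : lam ≠ 0 := hl.ne'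
  have h3 : (k.factorial:ℝ) ≠ 0 := by positivity
  rw [Real.exp_neg]
  field_simp

/-- The Stein equation for the singleton solution. -/
lemma gg_stein (j k : ℕ) :
    lam * gg lam j (k+1) - k * gg lam j k = (if j = k then 1 else 0) - c lam j := by
  rcases Nat.eq_zero_or_pos k with rfl | hk
  · -- k = 0
    rcases Nat.eq_zero_or_pos j with rfl | hj
    · rw [gg_b 0 1 one_ne_zero Nat.zero_lt_one]
      simp only [gg, if_pos rfl, if_pos rfl]
      rw [bb]
      have hT : T lam 1 = Real.exp lam - S lam 1 := by
        have := S_add_T lam 1; linarith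
      have hS : S lam 1 = 1 := by rw [S]; simp [u]
      rw [hT, hS]
      simp only [c, Nat.cast_zero]
      rw [u, Real.exp_neg]
      norm_num
      field_simp
    · rw [gg_a j 1 one_ne_zero hj]
      simp only [gg, if_pos rfl]
      rw [aa_one hl]
      have hj0 : j ≠ 0 := by omega
      rw [if_neg hj0]
      have hln : lam ≠ 0 := hl.ne'
      field_simp
      ring
  · have hk0 : k ≠ 0 := by omega
    rcases lt_trichotomy k j with h | rfl | h
    · rw [gg_a j (k+1) (Nat.succ_ne_zero k) (by omega), gg_a j k hk0 (by omega)]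
      rw [if_neg (by omega), show lam * -(c lam j * aa lam (k+1)) - (k:ℝ) * -(c lam j * aa lam k)
        = -(c lam j * (lam * aa lam (k+1) - (k:ℝ) * aa lam k)) from by ring,
        lam_mul_aa_succ hl k hk]
      ring
    · rw [gg_b k (k+1) (Nat.succ_ne_zero k) (by omega), gg_a k k hk0 (le_refl k)]
      rw [if_pos rfl]
      have hd := diag_identity hl k hk
      have hc := c_mul_exp hl k
      have : lam * (c lam k * bb lam (k+1)) - (k:ℝ) * -(c lam k * aa lam k)
          = c lam k * (lam * bb lam (k+1) + k * aa lam k) := by ring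
      rw [this, hd]
      rw [mul_sub, hc]
      ring
    · rw [gg_b j (k+1) (Nat.succ_ne_zero k) (by omega), gg_b j k hk0 (by omega)]
      rw [if_neg (by omega), show lam * (c lam j * bb lam (k+1)) - (k:ℝ) * (c lam j * bb lam k)
        = c lam j * (lam * bb lam (k+1) - (k:ℝ) * bb lam k) from by ring,
        lam_mul_bb_succ hl k hk]
      ring

noncomputable def dmax (x : ℝ) : ℝ := (1 - Real.exp (-x)) / x

lemma dmax_nonneg : 0 ≤ dmax lam := by
  rw [dmax]
  apply div_nonneg _ hl.le
  have : Real.exp (-lam) ≤ 1 := Real.exp_le_one_iff.2 (by linarith)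
  linarith

lemma dmax_le_min : dmax lam ≤ min 1 (1/lam) := by
  rw [dmax, le_min_iff]
  constructor
  · rw [div_le_one hl]
    have := Real.add_one_le_exp (-lam)
    linarith
  · rw [div_le_div_iff₀ hl hl]
    nlinarith [Real.exp_pos (-lam)]

/-- off-diagonal increments are nonpositive -/
lemma gg_incr_nonpos (j k : ℕ) (hk : 1 ≤ k) (hjk : j ≠ k) :
    gg lam j (k+1) - gg lam j k ≤ 0 := by
  have hk0 : k ≠ 0 := by omega
  rcases lt_or_gt_of_ne hjk with h | h
  · -- j < k : b branch both
    rw [gg_b j (k+1) (Nat.succ_ne_zero k) (by omega), gg_b j k hk0 h]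
    have := bb_mono hl k hk
    nlinarith [c_nonneg hl j]
  · -- j > k : a branch both
    rw [gg_a j (k+1) (Nat.succ_ne_zero k) (by omega), gg_a j k hk0 (by omega)]
    have := aa_mono hl k hk
    nlinarith [c_nonneg hl j]

/-- the diagonal increment is at most `dmax`. -/
lemma gg_incr_diag (k : ℕ) (hk : 1 ≤ k) :
    gg lam k (k+1) - gg lam k k ≤ dmax lam := by
  have hk0 : k ≠ 0 := by omega
  rw [gg_b k (k+1) (Nat.succ_ne_zero k) (by omega), gg_a k k hk0 (le_refl k)]
  -- c k * bb (k+1) + c k * aa k ≤ (1 - e^{-λ})/λ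
  -- c k * bb (k+1) = e^{-λ} T(k+1)/λ ; c k * aa k = e^{-λ} S k / k
  have e1 : c lam k * bb lam (k+1) = Real.exp (-lam) * T lam (k+1) / lam := by
    rw [c, bb, u]
    simp only [Nat.add_sub_cancel]
    have h2 : lam ≠ 0 := hl.ne'
    have h3 : (k.factorial:ℝ) ≠ 0 := by positivity
    field_simp
    ring
  have e2 : c lam k * aa lam k = Real.exp (-lam) * S lam k / k := by
    obtain ⟨n, rfl⟩ : ∃ n, k = n + 1 := ⟨k-1, (Nat.succ_pred_eq_of_pos hk).symm⟩
    rw [c, aa, u]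
    simp only [Nat.add_sub_cancel]
    have h2 : lam ≠ 0 := hl.ne'
    have h3 : ((n+1).factorial:ℝ) ≠ 0 := by positivity
    have e4 : ((n+1).factorial : ℝ) = (n+1) * n.factorial := by
      push_cast [Nat.factorial_succ]; ring
    field_simp
    rw [e4]
    push_cast
    ring
  have key : S lam k / k ≤ (S lam (k+1) - 1) / lam := by
    rw [div_le_div_iff₀ (by exact_mod_cast hk) hl]
    have hS1 : S lam (k+1) - 1 = ∑ i ∈ Finset.range k, u lam (i+1) := by
      rw [S, Finset.sum_range_succ' (u lam) k]
      simp [u]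
    rw [hS1, S, Finset.sum_mul, Finset.sum_mul]
    apply Finset.sum_le_sum
    intro i hi
    have hik : i + 1 ≤ k := Finset.mem_range.1 hi
    rw [u, u, pow_succ]
    have e5 : ((i+1).factorial : ℝ) = (i+1) * i.factorial := by
      push_cast [Nat.factorial_succ]; ring
    rw [e5, div_mul_eq_mul_div, div_mul_eq_mul_div,
      div_le_div_iff₀ (by positivity) (by positivity)]
    have hik' : ((i:ℝ)+1) ≤ (k:ℝ) := by exact_mod_cast hik
    have hu : (0:ℝ) ≤ lam ^ i * lam * i.factorial := by positivity
    nlinarith [mul_le_mul_of_nonneg_right hik' hu]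
  -- now combine
  have hTS : T lam (k+1) + (S lam (k+1) - 1) = Real.exp lam - 1 := by
    have := S_add_T lam (k+1); linarith
  have hexp : (0:ℝ) < Real.exp (-lam) := Real.exp_pos _
  have : c lam k * bb lam (k+1) - -(c lam k * aa lam k)
      = Real.exp (-lam) * T lam (k+1) / lam + Real.exp (-lam) * S lam k / k := by
    rw [e1, e2]; ring
  rw [this, dmax]
  have step : Real.exp (-lam) * S lam k / k ≤ Real.exp (-lam) * (S lam (k+1) - 1) / lam := by
    rw [mul_div_assoc, mul_div_assoc]
    exact mul_le_mul_of_nonneg_left key hexp.le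
  have final : Real.exp (-lam) * T lam (k+1) / lam + Real.exp (-lam) * (S lam (k+1) - 1) / lam
      = (1 - Real.exp (-lam)) / lam := by
    rw [← add_div, ← mul_add, hTS]
    rw [mul_sub, mul_one, ← Real.exp_add]
    simp
  linarith [step, final.le]

lemma summable_gg (k : ℕ) : Summable (fun j => gg lam j k) := by
  apply Summable.of_norm_bounded (g := fun j => c lam j * (aa lam k + bb lam k))
    ((summable_c (lam := lam)).mul_right _)
  intro j
  rw [Real.norm_eq_abs]
  rcases eq_or_ne k 0 with rfl | hk0
  · norm_num [gg]
    nlinarith [c_nonneg hl j, aa_nonneg hl 0, bb_nonneg hl 0]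
  · rw [gg, if_neg hk0]
    have h1 := c_nonneg hl j
    have h2 := aa_nonneg hl k
    have h3 := bb_nonneg hl k
    split
    · rw [abs_neg, abs_of_nonneg (by positivity)]
      nlinarith
    · rw [abs_of_nonneg (by positivity)]
      nlinarith

lemma tsum_c_add (k : ℕ) : ∑' j, c lam (j + k) = Real.exp (-lam) * T lam k := by
  rw [T, ← tsum_mul_left]
  exact tsum_congr fun j => rfl

lemma tsum_gg_zero (k : ℕ) : ∑' j, gg lam j k = 0 := by
  rcases eq_or_ne k 0 with rfl | hk0
  · simp [gg]
  · have hsum := summable_gg hl k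
    have hsplit := Summable.sum_add_tsum_nat_add (f := fun j => gg lam j k) k hsum
    have h1 : ∑ j ∈ Finset.range k, gg lam j k = Real.exp (-lam) * S lam k * bb lam k := by
      rw [S, Finset.mul_sum, Finset.sum_mul]
      apply Finset.sum_congr rfl
      intro j hj
      rw [gg_b j k hk0 (Finset.mem_range.1 hj), c]
    have h2 : ∑' j, gg lam (j + k) k = -(Real.exp (-lam) * T lam k * aa lam k) := by
      have : ∀ j : ℕ, gg lam (j + k) k = -(aa lam k) * c lam (j + k) := by
        intro j
        rw [gg_a (j+k) k hk0 (by omega)]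
        ring
      rw [tsum_congr this, tsum_mul_left, tsum_c_add hl]
      ring
    have h3 : Real.exp (-lam) * S lam k * bb lam k
        = Real.exp (-lam) * T lam k * aa lam k := by
      rw [bb, aa]
      ring
    rw [h1, h2, h3] at hsplit
    linarith [hsplit]

section gA

noncomputable def gA (x : ℝ) (A : Set ℕ) (k : ℕ) : ℝ :=
  ∑' j, A.indicator (fun j => gg x j k) j

lemma summable_ind (A : Set ℕ) (k : ℕ) :
    Summable (fun j => A.indicator (fun j => gg lam j k) j) := by
  apply (summable_gg hl k).indicator

lemma summable_ind_c (A : Set ℕ) : Summable (fun j => A.indicator (c lam) j) :=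
  (summable_c (lam := lam)).indicator A

/-- Stein equation for `gA`. -/
lemma gA_stein (A : Set ℕ) (k : ℕ) :
    lam * gA lam A (k+1) - k * gA lam A k
      = A.indicator 1 k - ∑' j, A.indicator (c lam) j := by
  rw [gA, gA, ← tsum_mul_left, ← tsum_mul_left,
    ← Summable.tsum_sub ((summable_ind hl A (k+1)).mul_left lam) ((summable_ind hl A k).mul_left (k:ℝ))]
  have : ∀ j, lam * A.indicator (fun j => gg lam j (k+1)) j
      - (k:ℝ) * A.indicator (fun j => gg lam j k) j
      = A.indicator (fun j => (if j = k then 1 else 0) - c lam j) j := by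
    intro j
    rcases Classical.em (j ∈ A) with h | h
    · rw [Set.indicator_of_mem h, Set.indicator_of_mem h, Set.indicator_of_mem h,
        ← gg_stein hl j k]
    · rw [Set.indicator_of_notMem h, Set.indicator_of_notMem h, Set.indicator_of_notMem h]
      ring
  rw [tsum_congr this]
  have hsplit : ∀ j, A.indicator (fun j => (if j = k then 1 else 0) - c lam j) j
      = A.indicator (fun j => if j = k then (1:ℝ) else 0) j - A.indicator (c lam) j := by
    intro j
    rcases Classical.em (j ∈ A) with h | h
    · rw [Set.indicator_of_mem h, Set.indicator_of_mem h, Set.indicator_of_mem h]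
    · rw [Set.indicator_of_notMem h, Set.indicator_of_notMem h, Set.indicator_of_notMem h]
      ring
  rw [tsum_congr hsplit, Summable.tsum_sub ?hs1 (summable_ind_c hl A)]
  case hs1 =>
    apply Summable.indicator
    exact summable_of_ne_finset_zero (s := {k}) (by intro j hj; simp at hj; simp [hj])
  congr 1
  have : ∀ j, A.indicator (fun j => if j = k then (1:ℝ) else 0) j
      = if j = k then A.indicator 1 k else 0 := by
    intro j
    rcases eq_or_ne j k with rfl | hne
    · rcases Classical.em (j ∈ A) with h | h
      · simp [Set.indicator_of_mem h]
      · simp [Set.indicator_of_notMem h]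
    · rcases Classical.em (j ∈ A) with h | h
      · rw [Set.indicator_of_mem h, if_neg hne, if_neg hne]
      · rw [Set.indicator_of_notMem h, if_neg hne]
  rw [tsum_congr this, tsum_ite_eq]

lemma gA_compl (A : Set ℕ) (k : ℕ) :
    gA lam A k + gA lam Aᶜ k = 0 := by
  rw [gA, gA, ← Summable.tsum_add ((summable_gg hl k).indicator A) ((summable_gg hl k).indicator Aᶜ)]
  rw [← tsum_gg_zero hl k]
  apply tsum_congr
  intro j
  rcases Classical.em (j ∈ A) with h | h
  · rw [Set.indicator_of_mem h, Set.indicator_of_notMem (by simp [h])]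
    ring
  · rw [Set.indicator_of_notMem h, Set.indicator_of_mem (by simp [h])]
    ring

lemma gA_incr_le (A : Set ℕ) (k : ℕ) (hk : 1 ≤ k) :
    gA lam A (k+1) - gA lam A k ≤ dmax lam := by
  rw [gA, gA, ← Summable.tsum_sub (summable_ind hl A (k+1)) (summable_ind hl A k)]
  have hle : ∀ j, A.indicator (fun j => gg lam j (k+1)) j - A.indicator (fun j => gg lam j k) j
      ≤ (if j = k then dmax lam else 0) := by
    intro j
    rcases Classical.em (j ∈ A) with h | h
    · rw [Set.indicator_of_mem h, Set.indicator_of_mem h]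
      rcases eq_or_ne j k with rfl | hne
      · rw [if_pos rfl]
        exact gg_incr_diag hl j hk
      · rw [if_neg hne]
        exact gg_incr_nonpos hl j k hk hne
    · rw [Set.indicator_of_notMem h, Set.indicator_of_notMem h]
      split
      · simp [dmax_nonneg hl]
      · simp
  calc ∑' j, (A.indicator (fun j => gg lam j (k+1)) j - A.indicator (fun j => gg lam j k) j)
      ≤ ∑' j, (if j = k then dmax lam else 0) := by
        apply Summable.tsum_le_tsum hle
          ((summable_ind hl A (k+1)).sub (summable_ind hl A k))
          (summable_of_ne_finset_zero (s := {k}) (by intro j hj; simp at hj; simp [hj]))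
    _ = dmax lam := tsum_ite_eq k (fun _ => dmax lam)

lemma gA_incr_abs (A : Set ℕ) (k : ℕ) (hk : 1 ≤ k) :
    |gA lam A (k+1) - gA lam A k| ≤ dmax lam := by
  rw [abs_le]
  refine ⟨?_, gA_incr_le hl A k hk⟩
  have h1 := gA_incr_le hl Aᶜ k hk
  have h2 := gA_compl hl A k
  have h3 := gA_compl hl A (k+1)
  linarith

end gA

omit hl in
lemma integrable_aux {Ω : Type*} [MeasurableSpace Ω] (μ : MeasureTheory.Measure Ω)
    [MeasureTheory.IsProbabilityMeasure μ] {X : Ω → ℕ} (hX : Measurable X) (N : ℕ)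
    (hN : ∀ ω, X ω ≤ N) (h : ℕ → ℝ) :
    MeasureTheory.Integrable (fun ω => h (X ω)) μ := by
  have hm : Measurable fun ω => h (X ω) := (Measurable.of_discrete (f := h)).comp hX
  set C := ((Finset.range (N+1)).image fun k => |h k|).max' (by simp) with hC
  apply MeasureTheory.Integrable.mono' (MeasureTheory.integrable_const C)
    hm.aestronglyMeasurable
  filter_upwards with ω
  rw [Real.norm_eq_abs]
  apply Finset.le_max'
  exact Finset.mem_image.2 ⟨X ω, Finset.mem_range.2 (Nat.lt_succ_of_le (hN ω)), rfl⟩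

end SteinChen

/-- total-variation Poisson approximation
`d_TV(L(W), Po(λ)) ≤ min(1, 1/λ) · λ₂` for a sum `W` of independent Bernoulli
random variables, where `d_TV(μ,ν) = sup_{A⊆ℕ} |μ(A) − ν(A)|`. -/
theorem bernoulli_sum_total_variation_poisson
    {Ω : Type*} [MeasurableSpace Ω] (μ : Measure Ω) [IsProbabilityMeasure μ]
    {V : Type*} [Fintype V]
    (I : V → Ω → ℕ) (p : V → ℝ)
    (hmeas : ∀ v, Measurable (I v))
    (h01 : ∀ v ω, I v ω = 0 ∨ I v ω = 1)
    (hp01 : ∀ v, p v ∈ Set.Icc (0 : ℝ) 1)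
    (hbern : ∀ v, μ {ω | I v ω = 1} = ENNReal.ofReal (p v))
    (hindep : iIndepFun I μ)
    (lam lam2 : ℝ) (hlam : lam = ∑ v, p v) (hlampos : 0 < lam)
    (hlam2 : lam2 = ∑ v, (p v) ^ 2) :
    (⨆ A : Set ℕ,
        |((μ.map (fun ω => ∑ v, I v ω)) A).toReal - poissonProb lam A|) ≤
      min 1 (1 / lam) * lam2 := by
  classical
  apply ciSup_le
  intro A
  set W := fun ω => ∑ v, I v ω with hW_def
  have hW : Measurable W := Finset.measurable_sum _ fun v _ => hmeas v
  set N := Fintype.card V with hN_def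
  have hIle : ∀ v ω, I v ω ≤ 1 := fun v ω => by rcases h01 v ω with h | h <;> omega
  have hWle : ∀ ω, W ω ≤ N := by
    intro ω
    calc W ω ≤ Finset.univ.card • 1 := Finset.sum_le_card_nsmul _ _ 1 (fun v _ => hIle v ω)
      _ = N := by simp [hN_def]
  set g := SteinChen.gA lam A with hg_def
  set Wv := fun (v : V) (ω : Ω) => ∑ u ∈ Finset.univ.erase v, I u ω with hWv_def
  have hWv : ∀ v, Measurable (Wv v) := fun v => Finset.measurable_sum _ fun u _ => hmeas u
  have hWvle : ∀ v ω, Wv v ω ≤ N := by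
    intro v ω
    calc Wv v ω ≤ ∑ u, I u ω :=
          Finset.sum_le_sum_of_subset (Finset.erase_subset _ _)
      _ ≤ N := hWle ω
  have hWsplit : ∀ v ω, W ω = Wv v ω + I v ω := fun v ω =>
    (Finset.sum_erase_add Finset.univ _ (Finset.mem_univ v)).symm
  have hindWv : ∀ v, IndepFun (Wv v) (I v) μ := by
    intro v
    have hfun : Wv v = ∑ u ∈ Finset.univ.erase v, I u := by
      funext ω
      rw [Finset.sum_apply]
    rw [hfun]
    exact hindep.indepFun_finsetSum_of_notMem hmeas (Finset.notMem_erase v _)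
  have hp_nonneg : ∀ v, 0 ≤ p v := fun v => (hp01 v).1
  -- expectation of a Bernoulli variable
  have hEI : ∀ v, ∫ ω, (I v ω : ℝ) ∂μ = p v := by
    intro v
    have hset : MeasurableSet {ω | I v ω = 1} := (hmeas v) (MeasurableSet.of_discrete (s := {1}))
    have hrepr : (fun ω => (I v ω : ℝ)) = Set.indicator {ω | I v ω = 1} (1 : Ω → ℝ) := by
      funext ω
      rcases h01 v ω with h | h
      · rw [Set.indicator_of_notMem (by simp [Set.mem_setOf_eq, h]), h]
        norm_num
      · rw [Set.indicator_of_mem (by simpa [Set.mem_setOf_eq] using h), h]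
        norm_num
    rw [hrepr, integral_indicator_one hset, measureReal_def, hbern v, ENNReal.toReal_ofReal (hp_nonneg v)]
  -- independence product identity
  have hprod : ∀ (v : V) (h : ℕ → ℝ),
      ∫ ω, (I v ω : ℝ) * h (Wv v ω) ∂μ = p v * ∫ ω, h (Wv v ω) ∂μ := by
    intro v h
    have h1 : IndepFun (fun ω => (I v ω : ℝ)) (fun ω => h (Wv v ω)) μ :=
      (hindWv v).symm.comp (Measurable.of_discrete (f := fun n : ℕ => (n : ℝ)))
        (Measurable.of_discrete (f := h))
    have h2 := h1.integral_fun_mul_eq_mul_integral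
      (((Measurable.of_discrete (f := fun n : ℕ => (n:ℝ))).comp (hmeas v)).aestronglyMeasurable)
      (((Measurable.of_discrete (f := h)).comp (hWv v)).aestronglyMeasurable)
    calc ∫ ω, (I v ω : ℝ) * h (Wv v ω) ∂μ
        = (∫ ω, (I v ω:ℝ) ∂μ) * ∫ ω, h (Wv v ω) ∂μ := h2
      _ = p v * ∫ ω, h (Wv v ω) ∂μ := by rw [hEI v]
  -- integrabilities
  have hint : ∀ (h : ℕ → ℝ), Integrable (fun ω => h (W ω)) μ :=
    fun h => SteinChen.integrable_aux μ hW N hWle h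
  have hintv : ∀ v (h : ℕ → ℝ), Integrable (fun ω => h (Wv v ω)) μ :=
    fun v h => SteinChen.integrable_aux μ (hWv v) N (fun ω => hWvle v ω) h
  have hbdI : ∀ v, ∃ C, ∀ ω, ‖(I v ω : ℝ)‖ ≤ C := by
    intro v
    refine ⟨1, fun ω => ?_⟩
    rw [Real.norm_eq_abs, abs_of_nonneg (by positivity)]
    exact_mod_cast hIle v ω
  have hintIv : ∀ v (h : ℕ → ℝ), Integrable (fun ω => (I v ω : ℝ) * h (Wv v ω)) μ := by
    intro v h
    exact Integrable.bdd_mul (hintv v h)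
      (((Measurable.of_discrete (f := fun n : ℕ => (n:ℝ))).comp (hmeas v)).aestronglyMeasurable)
      (ae_of_all μ (hbdI v).choose_spec)
  have hintIW : ∀ v (h : ℕ → ℝ), Integrable (fun ω => (I v ω : ℝ) * h (W ω)) μ := by
    intro v h
    exact Integrable.bdd_mul (hint h)
      (((Measurable.of_discrete (f := fun n : ℕ => (n:ℝ))).comp (hmeas v)).aestronglyMeasurable)
      (ae_of_all μ (hbdI v).choose_spec)
  -- measure of A as an integral
  have hA_meas : MeasurableSet (W ⁻¹' A) := hW MeasurableSet.of_discrete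
  have hstepA : ((μ.map W) A).toReal = ∫ ω, Set.indicator A (1 : ℕ → ℝ) (W ω) ∂μ := by
    rw [Measure.map_apply hW MeasurableSet.of_discrete, ← measureReal_def, ← integral_indicator_one hA_meas]
    apply integral_congr_ae (ae_of_all μ _)
    intro ω
    by_cases h : W ω ∈ A
    · rw [Set.indicator_of_mem h, Set.indicator_of_mem (show ω ∈ W ⁻¹' A from h)]
      rfl
    · rw [Set.indicator_of_notMem h, Set.indicator_of_notMem (show ω ∉ W ⁻¹' A from h)]
  have hstepB : poissonProb lam A = ∑' j, A.indicator (SteinChen.c lam) j := by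
    unfold poissonProb
    apply tsum_congr
    intro n
    by_cases h : n ∈ A
    · rw [Set.indicator_of_mem h, Set.indicator_of_mem h, SteinChen.c, SteinChen.u]
      ring
    · rw [Set.indicator_of_notMem h, Set.indicator_of_notMem h]
  have hstein : ∀ ω, Set.indicator A (1:ℕ→ℝ) (W ω) - poissonProb lam A
      = lam * g (W ω + 1) - (W ω : ℝ) * g (W ω) := by
    intro ω
    rw [hstepB, hg_def]
    exact (SteinChen.gA_stein hlampos A (W ω)).symm
  -- pointwise rewriting of I_v * g(W)
  have hIg : ∀ v ω, (I v ω : ℝ) * g (W ω) = (I v ω : ℝ) * g (Wv v ω + 1) := by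
    intro v ω
    rcases h01 v ω with h | h
    · rw [h]; norm_num
    · rw [hWsplit v ω, h]
  have hgdiff : ∀ v ω, g (W ω + 1) - g (Wv v ω + 1)
      = (I v ω : ℝ) * (g (Wv v ω + 1 + 1) - g (Wv v ω + 1)) := by
    intro v ω
    rcases h01 v ω with h | h
    · rw [hWsplit v ω, h]; norm_num
    · rw [hWsplit v ω, h]; push_cast; ring
  -- the key identity
  have key : ((μ.map W) A).toReal - poissonProb lam A
      = ∑ v, (p v)^2 * ∫ ω, (g (Wv v ω + 1 + 1) - g (Wv v ω + 1)) ∂μ := by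
    have e0 : ((μ.map W) A).toReal - poissonProb lam A
        = ∫ ω, (Set.indicator A (1:ℕ→ℝ) (W ω) - poissonProb lam A) ∂μ := by
      rw [integral_sub (hint (fun n => Set.indicator A (1:ℕ→ℝ) n)) (integrable_const _),
        integral_const]
      simp [hstepA]
    have e1 : ((μ.map W) A).toReal - poissonProb lam A
        = lam * (∫ ω, g (W ω + 1) ∂μ) - ∫ ω, (W ω : ℝ) * g (W ω) ∂μ := by
      rw [e0, integral_congr_ae (ae_of_all μ hstein),
        integral_sub ((hint (fun n => g (n+1))).const_mul lam) (hint (fun n => (n:ℝ) * g n)),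
        integral_const_mul]
    have e2 : ∫ ω, (W ω : ℝ) * g (W ω) ∂μ = ∑ v, ∫ ω, (I v ω : ℝ) * g (W ω) ∂μ := by
      rw [← integral_finset_sum _ (fun v _ => hintIW v g)]
      apply integral_congr_ae (ae_of_all μ _)
      intro ω
      simp only [hW_def]
      rw [Nat.cast_sum, Finset.sum_mul]
    have e3 : ∀ v, ∫ ω, (I v ω : ℝ) * g (W ω) ∂μ = p v * ∫ ω, g (Wv v ω + 1) ∂μ := by
      intro v
      rw [integral_congr_ae (ae_of_all μ (fun ω => hIg v ω)), hprod v (fun n => g (n+1))]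
    have e4 : lam * (∫ ω, g (W ω + 1) ∂μ) = ∑ v, p v * ∫ ω, g (W ω + 1) ∂μ := by
      rw [hlam, Finset.sum_mul]
    rw [e1, e2, e4]
    rw [← Finset.sum_sub_distrib]
    apply Finset.sum_congr rfl
    intro v _
    rw [e3 v, ← mul_sub,
      ← integral_sub (hint (fun n => g (n+1))) (hintv v (fun n => g (n+1)))]
    rw [integral_congr_ae (ae_of_all μ (fun ω => hgdiff v ω)),
      hprod v (fun n => g (n+1+1) - g (n+1))]
    ring
  -- bound each term
  rw [key]
  have hbound : ∀ v, |(p v)^2 * ∫ ω, (g (Wv v ω + 1 + 1) - g (Wv v ω + 1)) ∂μ|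
      ≤ (p v)^2 * SteinChen.dmax lam := by
    intro v
    rw [abs_mul, abs_of_nonneg (by positivity : (0:ℝ) ≤ (p v)^2)]
    apply mul_le_mul_of_nonneg_left _ (by positivity)
    have := norm_integral_le_of_norm_le_const (μ := μ)
      (f := fun ω => g (Wv v ω + 1 + 1) - g (Wv v ω + 1)) (C := SteinChen.dmax lam) ?_
    · simpa using this
    · filter_upwards with ω
      rw [Real.norm_eq_abs]
      exact SteinChen.gA_incr_abs hlampos A (Wv v ω + 1) (by omega)
  calc |∑ v, (p v)^2 * ∫ ω, (g (Wv v ω + 1 + 1) - g (Wv v ω + 1)) ∂μ|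
      ≤ ∑ v, |(p v)^2 * ∫ ω, (g (Wv v ω + 1 + 1) - g (Wv v ω + 1)) ∂μ| :=
        Finset.abs_sum_le_sum_abs _ _
    _ ≤ ∑ v, (p v)^2 * SteinChen.dmax lam := Finset.sum_le_sum fun v _ => hbound v
    _ = lam2 * SteinChen.dmax lam := by rw [hlam2, Finset.sum_mul]
    _ ≤ lam2 * min 1 (1/lam) := by
        apply mul_le_mul_of_nonneg_left (SteinChen.dmax_le_min hlampos)
        rw [hlam2]
        positivity
    _ = min 1 (1/lam) * lam2 := by ring
end
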